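/- If q̂, p̂ are self-adjoint operators satisfying the canonical commutation relation [q̂,p̂] = iℏ (or more generally any elements of an associative algebra), the II^ℏ quantum bracket still satisfies the Jacobi identity; in particular the Jacobi identity for II^ℏ is independent of ℏ. Concretely: for any elements q̂, p̂ of an associative unital ℂ-algebra, the bracket on the rank-3 free module with structure constants μ̂₂₃¹ = (p̂+p₀)/(2p₀), μ̂₂₃² = ωq̂/(2p₀), μ̂₃₁¹ = ωq̂/(2p₀), μ̂₃₁² = (p₀−p̂)/(2p₀) has vanishing Jacobian on all basis triples, for every value of [q̂,p̂]. -/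
import Mathlib


/-- Antisymmetric bracket on the rank-3 free module over a ℂ-algebra `A`,
defined by structure constants `m i j k ∈ A`. -/
noncomputable def qbkt {A : Type*} [Ring A] [Algebra ℂ A]
    (m : Fin 3 → Fin 3 → Fin 3 → A) (x y : Fin 3 → A) : Fin 3 → A :=
  fun k => ∑ i : Fin 3, ∑ j : Fin 3, x i * y j * m i j k

/-- The quantum Jacobian `Ĵ(x,y,z) = [[x,y],z] + [[y,z],x] + [[z,x],y]`. -/
noncomputable def qjac {A : Type*} [Ring A] [Algebra ℂ A]
    (m : Fin 3 → Fin 3 → Fin 3 → A) (x y z : Fin 3 → A) : Fin 3 → A :=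
  qbkt m (qbkt m x y) z + qbkt m (qbkt m y z) x + qbkt m (qbkt m z x) y

/-- Structure constants of II^ℏ over a ℂ-algebra:
`μ̂₂₃¹ = (p̂+p₀)/(2p₀)`, `μ̂₂₃² = ωq̂/(2p₀)`, `μ̂₃₁¹ = ωq̂/(2p₀)`, `μ̂₃₁² = (p₀−p̂)/(2p₀)`. -/
noncomputable def muIIhC {A : Type*} [Ring A] [Algebra ℂ A]
    (qh ph : A) (ω p₀ : ℝ) : Fin 3 → Fin 3 → Fin 3 → A :=
  ![![![0, 0, 0], ![0, 0, 0],
      ![-((((2 * p₀ : ℝ) : ℂ))⁻¹ • ((ω : ℂ) • qh)),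
        -((((2 * p₀ : ℝ) : ℂ))⁻¹ • ((p₀ : ℂ) • (1 : A) - ph)), 0]],
    ![![0, 0, 0], ![0, 0, 0],
      ![(((2 * p₀ : ℝ) : ℂ))⁻¹ • (ph + (p₀ : ℂ) • (1 : A)),
        (((2 * p₀ : ℝ) : ℂ))⁻¹ • ((ω : ℂ) • qh), 0]],
    ![![(((2 * p₀ : ℝ) : ℂ))⁻¹ • ((ω : ℂ) • qh),
        (((2 * p₀ : ℝ) : ℂ))⁻¹ • ((p₀ : ℂ) • (1 : A) - ph), 0],
      ![-((((2 * p₀ : ℝ) : ℂ))⁻¹ • (ph + (p₀ : ℂ) • (1 : A))),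
        -((((2 * p₀ : ℝ) : ℂ))⁻¹ • ((ω : ℂ) • qh)), 0],
      ![0, 0, 0]]]

lemma qbkt_basis {A : Type*} [Ring A] [Algebra ℂ A]
    (m : Fin 3 → Fin 3 → Fin 3 → A) (i j : Fin 3) :
    qbkt m (fun l => if l = i then 1 else 0) (fun l => if l = j then 1 else 0)
      = fun k => m i j k := by
  funext k
  simp [qbkt, ite_mul, one_mul, zero_mul, Finset.sum_ite_eq', Finset.sum_ite_eq]

lemma qbkt_right_basis {A : Type*} [Ring A] [Algebra ℂ A]
    (m : Fin 3 → Fin 3 → Fin 3 → A) (x : Fin 3 → A) (k : Fin 3) :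
    qbkt m x (fun l => if l = k then 1 else 0)
      = fun l => ∑ a : Fin 3, x a * m a k l := by
  funext l
  simp [qbkt, mul_ite, ite_mul, mul_one, mul_zero, zero_mul, Finset.sum_ite_eq', Finset.sum_ite_eq]

set_option maxHeartbeats 1000000 in
/-- For arbitrary `q̂, p̂` in an associative unital ℂ-algebra (no CCR needed), the
II^ℏ bracket has vanishing Jacobian on all basis triples, for every value of `[q̂,p̂]`. -/
theorem IIh_jacobi_complex {A : Type*} [Ring A] [Algebra ℂ A]
    (qh ph : A) (ω p₀ : ℝ) (hp₀ : p₀ ≠ 0) :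
    ∀ i j k : Fin 3,
      qjac (muIIhC qh ph ω p₀)
        (fun l => if l = i then 1 else 0)
        (fun l => if l = j then 1 else 0)
        (fun l => if l = k then 1 else 0) = 0 := by
  intro i j k
  unfold qjac
  rw [qbkt_basis, qbkt_basis, qbkt_basis, qbkt_right_basis, qbkt_right_basis, qbkt_right_basis]
  funext l
  fin_cases i <;> fin_cases j <;> fin_cases k <;> fin_cases l <;>
    · simp only [muIIhC, Fin.sum_univ_three, Fin.zero_eta, Fin.mk_one, Fin.reduceFinMk,
        smul_zero, neg_zero, Fin.isValue, Matrix.cons_val_zero,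
        Matrix.cons_val_one, Matrix.head_cons, Matrix.cons_val_two, Matrix.tail_cons,
        Pi.add_apply, mul_zero, zero_mul, add_zero, zero_add, neg_mul, mul_neg, neg_neg,
        mul_smul_comm, smul_mul_assoc, smul_smul, Pi.zero_apply,
        mul_add, add_mul, mul_sub, sub_mul, mul_one, one_mul, smul_add, smul_sub, smul_neg]
      try module
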